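/- Let P ⪰ 0 be n×n, C ∈ ℝᵐˣⁿ, R ∈ ℝᵐˣᵐ positive definite, and A ∈ ℝⁿˣⁿ. Define M₁ = A P Cᵀ (C P Cᵀ + R)⁻¹ C P Aᵀ and M₂ = A P Cᵀ (C P Cᵀ + R/2)⁻¹ C P Aᵀ. Then M₂ ⪰ M₁ ⪰ 0 and 2M₁ - M₂ ⪰ 0. -/

import Mathlib

open Matrix

private lemma psd_smul {k : ℕ} {c : ℝ} (hc : 0 ≤ c) {X : Matrix (Fin k) (Fin k) ℝ}
    (hX : X.PosSemidef) : (c • X).PosSemidef := by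
  constructor
  · show (c • X)ᴴ = c • X
    rw [conjTranspose_smul, star_trivial, hX.1]
  · intro x
    exact (hX.smul hc).2 x

private lemma pd_smul {k : ℕ} {c : ℝ} (hc : 0 < c) {X : Matrix (Fin k) (Fin k) ℝ}
    (hX : X.PosDef) : (c • X).PosDef := by
  constructor
  · show (c • X)ᴴ = c • X
    rw [conjTranspose_smul, star_trivial, hX.1]
  · intro x hx
    exact (hX.smul hc).2 hx

/-- Inverse is antitone on positive definite matrices. -/
private lemma inv_antitone {k : ℕ} {X Y : Matrix (Fin k) (Fin k) ℝ}
    (hX : X.PosDef) (hY : Y.PosDef) (hXY : (X - Y).PosSemidef) :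
    (Y⁻¹ - X⁻¹).PosSemidef := by
  set D := X - Y with hD
  have hXu := hX.isUnit
  have hYu := hY.isUnit
  have hXi : X * X⁻¹ = 1 := mul_nonsing_inv _ ((isUnit_iff_isUnit_det _).1 hXu)
  have hiX : X⁻¹ * X = 1 := nonsing_inv_mul _ ((isUnit_iff_isUnit_det _).1 hXu)
  have hYi : Y * Y⁻¹ = 1 := mul_nonsing_inv _ ((isUnit_iff_isUnit_det _).1 hYu)
  have hiY : Y⁻¹ * Y = 1 := nonsing_inv_mul _ ((isUnit_iff_isUnit_det _).1 hYu)
  have h2 : X⁻¹ * D * Y⁻¹ = Y⁻¹ - X⁻¹ := by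
    rw [hD, Matrix.mul_sub, Matrix.sub_mul, hiX, Matrix.mul_assoc, hYi,
      Matrix.one_mul, Matrix.mul_one]
  have key : Y⁻¹ - X⁻¹ = X⁻¹ * D * X⁻¹ + (X⁻¹ * D) * Y⁻¹ * (X⁻¹ * D)ᴴ := by
    have hDh : Dᴴ = D := hXY.1
    have hXh : (X⁻¹)ᴴ = X⁻¹ := hX.inv.isHermitian
    rw [conjTranspose_mul, hDh, hXh]
    have h1 : Y⁻¹ * D * X⁻¹ = Y⁻¹ - X⁻¹ := by
      rw [hD, Matrix.mul_sub, Matrix.sub_mul, Matrix.mul_assoc, hXi,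
        Matrix.mul_one, hiY, Matrix.one_mul]
    rw [← h1, h2]
    noncomm_ring
  rw [key]
  have t1 : (X⁻¹ * D * X⁻¹).PosSemidef := by
    have := hXY.mul_mul_conjTranspose_same X⁻¹
    rwa [hX.inv.isHermitian] at this
  have t2 : ((X⁻¹ * D) * Y⁻¹ * (X⁻¹ * D)ᴴ).PosSemidef :=
    hY.inv.posSemidef.mul_mul_conjTranspose_same _
  exact t1.add t2

theorem stmt_6 {n m : ℕ} (A P : Matrix (Fin n) (Fin n) ℝ) (hP : P.PosSemidef)
    (C : Matrix (Fin m) (Fin n) ℝ) (R : Matrix (Fin m) (Fin m) ℝ) (hR : R.PosDef)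
    (M₁ M₂ : Matrix (Fin n) (Fin n) ℝ)
    (hM₁ : M₁ = A * P * Cᵀ * (C * P * Cᵀ + R)⁻¹ * C * P * Aᵀ)
    (hM₂ : M₂ = A * P * Cᵀ * (C * P * Cᵀ + (2:ℝ)⁻¹ • R)⁻¹ * C * P * Aᵀ) :
    (M₂ - M₁).PosSemidef ∧ M₁.PosSemidef ∧ ((2:ℝ) • M₁ - M₂).PosSemidef := by
  have hCT : Cᴴ = Cᵀ := by ext i j; simp [conjTranspose_apply]
  have hT : (C * P * Cᵀ).PosSemidef := by
    have := hP.mul_mul_conjTranspose_same C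
    rwa [hCT] at this
  set T := C * P * Cᵀ with hTdef
  set B := A * P * Cᵀ with hBdef
  have hPt : Pᵀ = P := by
    rw [← conjTranspose_eq_transpose_of_trivial]
    exact hP.1
  have hBH : Bᴴ = C * P * Aᵀ := by
    rw [hBdef, conjTranspose_eq_transpose_of_trivial, transpose_mul, transpose_mul,
      transpose_transpose, hPt, Matrix.mul_assoc]
  have hS₁ : (T + R).PosDef := Matrix.PosDef.posSemidef_add hT hR
  have hR2 : ((2:ℝ)⁻¹ • R).PosDef := pd_smul (by norm_num) hR
  have hS₂ : (T + (2:ℝ)⁻¹ • R).PosDef := Matrix.PosDef.posSemidef_add hT hR2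
  have hM₁' : M₁ = B * (T + R)⁻¹ * Bᴴ := by
    rw [hM₁, hBH]; simp [hBdef, hTdef, Matrix.mul_assoc]
  have hM₂' : M₂ = B * (T + (2:ℝ)⁻¹ • R)⁻¹ * Bᴴ := by
    rw [hM₂, hBH]; simp [hBdef, hTdef, Matrix.mul_assoc]
  refine ⟨?_, ?_, ?_⟩
  · have hd : ((T + R) - (T + (2:ℝ)⁻¹ • R)).PosSemidef := by
      have he : (T + R) - (T + (2:ℝ)⁻¹ • R) = (2:ℝ)⁻¹ • R := by
        module
      rw [he]; exact hR2.posSemidef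
    have hres := (inv_antitone hS₁ hS₂ hd).mul_mul_conjTranspose_same B
    have heq : B * ((T + (2:ℝ)⁻¹ • R)⁻¹ - (T + R)⁻¹) * Bᴴ = M₂ - M₁ := by
      rw [hM₁', hM₂', Matrix.mul_sub, Matrix.sub_mul]
    rwa [heq] at hres
  · rw [hM₁']
    exact hS₁.inv.posSemidef.mul_mul_conjTranspose_same B
  · set Y := (2:ℝ)⁻¹ • (T + R) with hYdef
    have hY : Y.PosDef := pd_smul (by norm_num) hS₁
    have hd : ((T + (2:ℝ)⁻¹ • R) - Y).PosSemidef := by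
      have he : (T + (2:ℝ)⁻¹ • R) - Y = (2:ℝ)⁻¹ • T := by
        rw [hYdef]; module
      rw [he]; exact psd_smul (by norm_num) hT
    have hYinv : Y⁻¹ = (2:ℝ) • (T + R)⁻¹ := by
      have hone : Y * ((2:ℝ) • (T + R)⁻¹) = 1 := by
        rw [hYdef, Matrix.smul_mul, Matrix.mul_smul,
          mul_nonsing_inv _ ((isUnit_iff_isUnit_det _).1 hS₁.isUnit), smul_smul]
        norm_num
      exact Matrix.inv_eq_right_inv hone
    have hres := (inv_antitone hS₂ hY hd).mul_mul_conjTranspose_same B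
    have heq : B * (Y⁻¹ - (T + (2:ℝ)⁻¹ • R)⁻¹) * Bᴴ = (2:ℝ) • M₁ - M₂ := by
      rw [hYinv, hM₁', hM₂', Matrix.mul_sub, Matrix.sub_mul]
      congr 1
      rw [Matrix.mul_smul, Matrix.smul_mul]
    rwa [heq] at hres
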